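/- Define F : ℝ³ → ℝ by F(d₁, d₂, d₃) = Σ_{i=1}^{3} (1/4)·√(dᵢ²·(dᵢ + 2)·(2 − dᵢ)) + (1/4)·√((d₁ + d₂ + d₃)·(−d₁ + d₂ + d₃)·(d₁ − d₂ + d₃)·(d₁ + d₂ − d₃)). Then F(√3, √3, √3) = 3·√3/2, F is differentiable at the point (√3, √3, √3), and its (Fréchet) derivative at that point is the zero linear map; in particular all three partial derivatives of F vanish at (√3, √3, √3). -/

import Mathlib

/-- The area of the convex hexagon with all sides of length `1` whose three main diagonals
have lengths `d₁, d₂, d₃`, as a function `ℝ³ → ℝ` (here `ℝ³ = ℝ × ℝ × ℝ`). -/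
noncomputable def hexagonAreaF : ℝ × ℝ × ℝ → ℝ := fun p =>
  (1 / 4) * Real.sqrt (p.1 ^ 2 * (p.1 + 2) * (2 - p.1)) +
  (1 / 4) * Real.sqrt (p.2.1 ^ 2 * (p.2.1 + 2) * (2 - p.2.1)) +
  (1 / 4) * Real.sqrt (p.2.2 ^ 2 * (p.2.2 + 2) * (2 - p.2.2)) +
  (1 / 4) * Real.sqrt ((p.1 + p.2.1 + p.2.2) * (-p.1 + p.2.1 + p.2.2) *
    (p.1 - p.2.1 + p.2.2) * (p.1 + p.2.1 - p.2.2))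

set_option maxHeartbeats 2000000 in
/-- `F(√3, √3, √3) = 3√3/2`, and `F` is differentiable at `(√3, √3, √3)` with Fréchet
derivative the zero linear map (so in particular all partial derivatives vanish there). -/
theorem hexagonAreaF_critical_at_regular :
    hexagonAreaF (Real.sqrt 3, Real.sqrt 3, Real.sqrt 3) = 3 * Real.sqrt 3 / 2 ∧
    HasFDerivAt hexagonAreaF (0 : ℝ × ℝ × ℝ →L[ℝ] ℝ)
      (Real.sqrt 3, Real.sqrt 3, Real.sqrt 3) := by
  have s3 : Real.sqrt 3 ^ 2 = 3 := Real.sq_sqrt (by norm_num)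
  have s3pos : (0:ℝ) < Real.sqrt 3 := Real.sqrt_pos.mpr (by norm_num)
  have inner3 : Real.sqrt 3 ^ 2 * (Real.sqrt 3 + 2) * (2 - Real.sqrt 3) = 3 := by nlinarith
  have inner27 : (Real.sqrt 3 + Real.sqrt 3 + Real.sqrt 3) * (-Real.sqrt 3 + Real.sqrt 3 + Real.sqrt 3) *
      (Real.sqrt 3 - Real.sqrt 3 + Real.sqrt 3) * (Real.sqrt 3 + Real.sqrt 3 - Real.sqrt 3) = 27 := by
    nlinarith
  have s27 : Real.sqrt 27 = 3 * Real.sqrt 3 := by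
    rw [show (27:ℝ) = (3 * Real.sqrt 3)^2 by nlinarith]
    exact Real.sqrt_sq (by positivity)
  constructor
  · simp only [hexagonAreaF]
    rw [inner3, inner27, s27]
    ring
  · set a : ℝ × ℝ × ℝ := (Real.sqrt 3, Real.sqrt 3, Real.sqrt 3) with ha
    set P1 : ℝ × ℝ × ℝ →L[ℝ] ℝ := ContinuousLinearMap.fst ℝ ℝ (ℝ × ℝ) with hP1
    set P2 : ℝ × ℝ × ℝ →L[ℝ] ℝ :=
      (ContinuousLinearMap.fst ℝ ℝ ℝ).comp (ContinuousLinearMap.snd ℝ ℝ (ℝ × ℝ)) with hP2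
    set P3 : ℝ × ℝ × ℝ →L[ℝ] ℝ :=
      (ContinuousLinearMap.snd ℝ ℝ ℝ).comp (ContinuousLinearMap.snd ℝ ℝ (ℝ × ℝ)) with hP3
    have hg : HasDerivAt (fun t : ℝ => (1/4) * Real.sqrt (t ^ 2 * (t + 2) * (2 - t)))
        (-(1/2)) (Real.sqrt 3) := by
      have h := ((((hasDerivAt_pow 2 (Real.sqrt 3)).mul
          ((hasDerivAt_id (Real.sqrt 3)).add_const 2)).mul
          ((hasDerivAt_const (Real.sqrt 3) (2:ℝ)).sub (hasDerivAt_id (Real.sqrt 3)))).sqrt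
          (by simp only [id_eq, Pi.mul_apply, Pi.sub_apply]; rw [inner3]; norm_num)).const_mul (1/4 : ℝ)
      simp only [id_eq, Pi.mul_apply, Pi.sub_apply] at h
      refine h.congr_deriv ?_
      rw [inner3]
      push_cast
      rw [pow_one]
      field_simp
      nlinarith
    have hx : HasFDerivAt (fun p : ℝ × ℝ × ℝ => p.1) P1 a := hasFDerivAt_fst
    have hy : HasFDerivAt (fun p : ℝ × ℝ × ℝ => p.2.1) P2 a :=
      hasFDerivAt_fst.comp a hasFDerivAt_snd
    have hz : HasFDerivAt (fun p : ℝ × ℝ × ℝ => p.2.2) P3 a :=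
      hasFDerivAt_snd.comp a hasFDerivAt_snd
    have q1 := hg.comp_hasFDerivAt a hx
    have q2 := hg.comp_hasFDerivAt a hy
    have q3 := hg.comp_hasFDerivAt a hz
    have q4 := (((((hx.add hy).add hz).mul ((hx.neg.add hy).add hz)).mul
        ((hx.sub hy).add hz)).mul ((hx.add hy).sub hz)).sqrt
        (by simp only [ha, Pi.mul_apply, Pi.add_apply, Pi.sub_apply, Pi.neg_apply]; rw [inner27]; norm_num) |>.const_mul (1/4 : ℝ)
    have q4' := q4.congr_fderiv (g' := ((1/2 : ℝ) • P1 + (1/2 : ℝ) • P2 + (1/2 : ℝ) • P3)) ?_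
    · have H := ((q1.add q2).add q3).add q4'
      refine H.congr_fderiv ?_
      ext <;>
      · simp only [ContinuousLinearMap.coe_comp', Function.comp_apply,
          ContinuousLinearMap.add_apply, ContinuousLinearMap.smul_apply,
          ContinuousLinearMap.zero_apply, hP1, hP2, hP3,
          ContinuousLinearMap.coe_fst', ContinuousLinearMap.coe_snd',
          ContinuousLinearMap.inl_apply, ContinuousLinearMap.inr_apply,
          smul_eq_mul, Prod.fst, Prod.snd]
        norm_num
    · ext <;>
      · simp only [ha, hP1, hP2, hP3, ContinuousLinearMap.coe_comp', Function.comp_apply,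
          ContinuousLinearMap.add_apply, ContinuousLinearMap.smul_apply,
          ContinuousLinearMap.sub_apply, ContinuousLinearMap.neg_apply,
          ContinuousLinearMap.coe_fst', ContinuousLinearMap.coe_snd',
          ContinuousLinearMap.inl_apply, ContinuousLinearMap.inr_apply, smul_eq_mul,
          Pi.mul_apply, Pi.add_apply, Pi.sub_apply, Pi.neg_apply, Prod.fst_zero, Prod.snd_zero]
        rw [inner27, s27]
        field_simp
        nlinarith [s3, s3pos]
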